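/- For a finite probability space with binary label y and a sequence x^(1),...,x^(t) (t ≥ 3) that is a first-order Markov chain conditionally on y (i.e., p(x^(s)|x^(s-1),...,x^(1),y) = p(x^(s)|x^(s-1),y) for all s ≥ 2), the log-likelihood ratio satisfies log(p(x^(1),...,x^(t)|y=1)/p(x^(1),...,x^(t)|y=0)) = Σ_{s=2}^t log(p(y=1|x^(s),x^(s-1))/p(y=0|x^(s),x^(s-1))) − Σ_{s=3}^t log(p(y=1|x^(s-1))/p(y=0|x^(s-1))) − log(p(y=1)/p(y=0)), assuming all relevant probabilities are positive. -/

import Mathlib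

/-- The 1st-order TANDEM formula. For a sequence that is a
first-order Markov chain conditionally on the binary label `y`, the
log-likelihood ratio decomposes into posterior log-ratios of doublets minus
posterior log-ratios of singlets minus the prior log-ratio.

Here, for the observed sequence, `single s y = p(x^(s) | y)` and
`pair s y = p(x^(s-1), x^(s) | y)` are the conditional marginal densities at
the observed values; `margS s = p(x^(s))`, `margP s = p(x^(s-1), x^(s))` are
the corresponding unconditional marginals; the posteriors are given by Bayes'
rule; and `joint y = p(x^(1),…,x^(t) | y)` satisfies the Markov chain-rule
decomposition `joint y = p(x^(1)|y) ∏_{s=2}^t p(x^(s-1),x^(s)|y)/p(x^(s-1)|y)`. -/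
theorem sprt_tandem_first_order_llr
    (t : ℕ) (ht : 3 ≤ t)
    (joint : Bool → ℝ) (single : ℕ → Bool → ℝ) (pair : ℕ → Bool → ℝ)
    (margS : ℕ → ℝ) (margP : ℕ → ℝ) (prior : Bool → ℝ)
    (post1 : ℕ → Bool → ℝ) (post2 : ℕ → Bool → ℝ)
    (hpost1 : ∀ s y, post1 s y = single s y * prior y / margS s)
    (hpost2 : ∀ s y, post2 s y = pair s y * prior y / margP s)
    (hjoint : ∀ y, joint y
      = single 1 y * ∏ s ∈ Finset.Icc 2 t, (pair s y / single (s - 1) y))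
    (hsingle : ∀ s y, 0 < single s y) (hpair : ∀ s y, 0 < pair s y)
    (hmargS : ∀ s, 0 < margS s) (hmargP : ∀ s, 0 < margP s)
    (hprior : ∀ y, 0 < prior y) :
    Real.log (joint true / joint false)
      = (∑ s ∈ Finset.Icc 2 t, Real.log (post2 s true / post2 s false))
        - (∑ s ∈ Finset.Icc 3 t, Real.log (post1 (s - 1) true / post1 (s - 1) false))
        - Real.log (prior true / prior false) := by
  set P := Real.log (prior true / prior false) with hP
  have hPne : ∀ y, prior y ≠ 0 := fun y => (hprior y).ne'
  have key2 : ∀ s, Real.log (post2 s true / post2 s false)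
      = (Real.log (pair s true) - Real.log (pair s false)) + P := by
    intro s
    rw [hpost2, hpost2]
    have h : pair s true * prior true / margP s / (pair s false * prior false / margP s)
        = (pair s true / pair s false) * (prior true / prior false) := by
      field_simp [(hmargP s).ne']
    rw [h, Real.log_mul (div_pos (hpair s true) (hpair s false)).ne'
        (div_pos (hprior true) (hprior false)).ne', hP,
      Real.log_div (hpair s true).ne' (hpair s false).ne']
  have key1 : ∀ s, Real.log (post1 s true / post1 s false)
      = (Real.log (single s true) - Real.log (single s false)) + P := by
    intro s
    rw [hpost1, hpost1]
    have h : single s true * prior true / margS s / (single s false * prior false / margS s)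
        = (single s true / single s false) * (prior true / prior false) := by
      field_simp [(hmargS s).ne']
    rw [h, Real.log_mul (div_pos (hsingle s true) (hsingle s false)).ne'
        (div_pos (hprior true) (hprior false)).ne', hP,
      Real.log_div (hsingle s true).ne' (hsingle s false).ne']
  have hlogjoint : ∀ y, Real.log (joint y)
      = Real.log (single 1 y)
        + ∑ s ∈ Finset.Icc 2 t, (Real.log (pair s y) - Real.log (single (s - 1) y)) := by
    intro y
    rw [hjoint y, Real.log_mul (hsingle 1 y).ne'
        (Finset.prod_ne_zero_iff.mpr fun s _ =>
          (div_pos (hpair s y) (hsingle (s-1) y)).ne'),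
      Real.log_prod (fun s _ => (div_pos (hpair s y) (hsingle (s-1) y)).ne')]
    congr 1
    exact Finset.sum_congr rfl fun s _ =>
      Real.log_div (hpair s y).ne' (hsingle (s-1) y).ne'
  have hjpos : ∀ y, 0 < joint y := by
    intro y
    rw [hjoint y]
    exact mul_pos (hsingle 1 y)
      (Finset.prod_pos fun s _ => div_pos (hpair s y) (hsingle (s-1) y))
  have hsplit : Finset.Icc 2 t = insert 2 (Finset.Icc 3 t) := by
    ext x
    simp only [Finset.mem_Icc, Finset.mem_insert]
    omega
  have h2notin : 2 ∉ Finset.Icc 3 t := by simp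
  rw [Real.log_div (hjpos true).ne' (hjpos false).ne', hlogjoint, hlogjoint]
  simp_rw [key2, key1]
  rw [hsplit, Finset.sum_insert h2notin, Finset.sum_insert h2notin,
    Finset.sum_insert h2notin]
  simp only [Finset.sum_sub_distrib, Finset.sum_add_distrib, Finset.sum_const,
    nsmul_eq_mul, show (2:ℕ) - 1 = 1 from rfl]
  ring
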